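/- With notation as in the cone lemma: U'U = I_K and U = D_τ^{-1/2} Π D_τ(I,I)^{1/2} U(I,:) with Π(I,:) = I_K. Then the inverse of the Gram matrix of the rows indexed by I satisfies (U(I,:) U(I,:)')⁻¹ = D_τ(I,I)^{1/2} Π' D_τ^{-1} Π D_τ(I,I)^{1/2}. -/

import Mathlib

open Matrix

/-- `(U(I,:) U(I,:)ᵀ)⁻¹ = D_τ(I,I)^{1/2} Πᵀ D_τ⁻¹ Π D_τ(I,I)^{1/2}`. -/
theorem gram_inverse_formula {N K : ℕ}
    (U Pm : Matrix (Fin N) (Fin K) ℝ)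
    (d : Fin N → ℝ) (hd : ∀ i, 0 < d i)
    (hnn : ∀ i k, 0 ≤ Pm i k) (hPrank : Pm.rank = K)
    (I : Fin K → Fin N) (hI : Function.Injective I)
    (hpure : Pm.submatrix I id = 1)
    (hUo : Uᵀ * U = 1)
    (hUeq : U = Matrix.diagonal (fun i => (Real.sqrt (d i))⁻¹) * Pm *
      Matrix.diagonal (fun k => Real.sqrt (d (I k))) * U.submatrix I id) :
    (U.submatrix I id * (U.submatrix I id)ᵀ)⁻¹ =
      Matrix.diagonal (fun k => Real.sqrt (d (I k))) * Pmᵀ *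
        Matrix.diagonal (fun i => (d i)⁻¹) * Pm *
        Matrix.diagonal (fun k => Real.sqrt (d (I k))) := by
  set A := U.submatrix I id with hA
  set S := Matrix.diagonal (fun k => Real.sqrt (d (I k))) with hS
  set D := Matrix.diagonal (fun i : Fin N => (Real.sqrt (d i))⁻¹) with hD
  set M := S * Pmᵀ * Matrix.diagonal (fun i => (d i)⁻¹) * Pm * S with hM
  have hdd : D * D = Matrix.diagonal (fun i => (d i)⁻¹) := by
    have h2 : (fun i => (Real.sqrt (d i))⁻¹ * (Real.sqrt (d i))⁻¹)
        = fun i => (d i)⁻¹ := by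
      funext i; rw [← mul_inv, Real.mul_self_sqrt (hd i).le]
    rw [hD, Matrix.diagonal_mul_diagonal, h2]
  have key : Aᵀ * M * A = 1 := by
    have h := hUo
    rw [hUeq] at h
    calc Aᵀ * M * A
        = (D * Pm * S * A)ᵀ * (D * Pm * S * A) := by
          rw [hM, ← hdd]
          simp only [hS, hD, Matrix.transpose_mul, Matrix.diagonal_transpose,
            Matrix.mul_assoc]
      _ = 1 := h
  have hdet : IsUnit A.det := by
    have : A.det * ((Aᵀ * M).det) = 1 := by
      have := congrArg Matrix.det key
      rw [Matrix.det_mul, Matrix.det_one] at this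
      linarith [this]
    exact IsUnit.of_mul_eq_one _ this
  have hdetT : IsUnit Aᵀ.det := by rwa [Matrix.det_transpose]
  have hMA : M * A = (Aᵀ)⁻¹ := by
    apply (Matrix.inv_eq_right_inv ?_).symm
    rw [← Matrix.mul_assoc]; exact key
  have hfin : M * (A * Aᵀ) = 1 := by
    rw [← Matrix.mul_assoc, hMA, Matrix.nonsing_inv_mul _ hdetT]
  exact Matrix.inv_eq_left_inv hfin
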